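/- Let G = (V, E) be a simple graph and suppose the sequences {d_k}, {b_k} additionally satisfy d_{k+1} ≥ 2(d_k + b_k) for all k. Then for every e ∈ E, every k ≥ 1, and every N ∈ M_k(e), the inclusion N ⊆ B_e(d_k/2) holds. -/
import Mathlib


open SimpleGraph Filter MeasureTheory ENNReal

noncomputable section

namespace UFPaper

variable {V : Type*}

/-- Distance between two edges of `G`, i.e. the graph distance in the line graph `L(G)`,
valued in `ℝ≥0∞` (with `∞` for unreachable pairs). -/
noncomputable def eDist (G : SimpleGraph V) (e f : G.edgeSet) : ℝ≥0∞ :=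
  ((G.lineGraph.edist e f : ℕ∞) : ℝ≥0∞)

/-- `B_e(r)`: the set of edges within distance `r` of the edge `e`. -/
def ball (G : SimpleGraph V) (e : G.edgeSet) (r : ℝ) : Set G.edgeSet :=
  {f | eDist G e f ≤ ENNReal.ofReal r}

/-- `dist(C, C')`: the minimum distance between two subsets of edges. -/
noncomputable def setDist (G : SimpleGraph V) (C C' : Set G.edgeSet) : ℝ≥0∞ :=
  ⨅ e ∈ C, ⨅ f ∈ C', eDist G e f

/-- `diam(C)`: the diameter of a subset of edges. -/
noncomputable def diam (G : SimpleGraph V) (C : Set G.edgeSet) : ℝ≥0∞ :=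
  ⨆ e ∈ C, ⨆ f ∈ C, eDist G e f

/-- Two edges `e, f` are `(r, R)`-isolated if `f ∉ B_e(R) \ B_e(r)`. -/
def IsolatedPair (G : SimpleGraph V) (r R : ℝ) (e f : G.edgeSet) : Prop :=
  f ∉ ball G e R \ ball G e r

/-- An edge `e` is `(r, R)`-isolated in `N` if `e` and `f` are `(r, R)`-isolated
for every `f ∈ N`. -/
def IsolatedIn (G : SimpleGraph V) (r R : ℝ) (N : Set G.edgeSet) (e : G.edgeSet) : Prop :=
  ∀ f ∈ N, IsolatedPair G r R e f

/-- `C ⊆ N` is a `(D, B)`-cluster in `N` if `diam C ≤ D` and `dist(N \ C, C) > B`. -/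
def IsCluster (G : SimpleGraph V) (D B : ℝ) (N C : Set G.edgeSet) : Prop :=
  C ⊆ N ∧ diam G C ≤ ENNReal.ofReal D ∧ ENNReal.ofReal B < setDist G (N \ C) C

/-- An edge is `(D, B)`-clustered in `N` if it belongs to some `(D, B)`-cluster in `N`. -/
def ClusteredIn (G : SimpleGraph V) (D B : ℝ) (N : Set G.edgeSet) (e : G.edgeSet) : Prop :=
  ∃ C : Set G.edgeSet, IsCluster G D B N C ∧ e ∈ C

/-- The level-`k` clustered sets `𝖭_k`. -/
def clusteredSet (G : SimpleGraph V) (d b : ℕ → ℝ) (N : Set G.edgeSet) : ℕ → Set G.edgeSet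
  | 0 => N
  | k + 1 => clusteredSet G d b N k \
      {e | ClusteredIn G (d k) (b k) (clusteredSet G d b N k) e}

/-- The level-`k` isolated sets `𝒩_k`. -/
def isolatedSet (G : SimpleGraph V) (d b : ℕ → ℝ) (N : Set G.edgeSet) : ℕ → Set G.edgeSet
  | 0 => N
  | k + 1 => isolatedSet G d b N k \
      {e | IsolatedIn G (d k / 2) (b k + d k / 2) (isolatedSet G d b N k) e}

/-- `M_k(e)`: the collection of minimal-size subsets of `E` forcing `e` into the level-`k`
isolated set. -/
def minForcing (G : SimpleGraph V) (d b : ℕ → ℝ) (k : ℕ) (e : G.edgeSet) :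
    Set (Set G.edgeSet) :=
  {N | e ∈ isolatedSet G d b N k ∧ ∀ N' : Set G.edgeSet, N' ⊂ N → e ∉ isolatedSet G d b N' k}

end UFPaper

namespace UFPaper

lemma eDist_self (G : SimpleGraph V) (e : G.edgeSet) : eDist G e e = 0 := by
  simp [eDist, SimpleGraph.edist_self]

lemma eDist_triangle (G : SimpleGraph V) (e f g : G.edgeSet) :
    eDist G e g ≤ eDist G e f + eDist G f g := by
  unfold eDist
  rw [← ENat.toENNReal_add]
  exact_mod_cast G.lineGraph.edist_triangle

/-- The locality radius. -/
def Dr (d b : ℕ → ℝ) : ℕ → ℝ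
  | 0 => 0
  | k + 1 => Dr d b k + (b k + d k / 2)

lemma Dr_nonneg (d b : ℕ → ℝ) (hd : ∀ k, 0 < d k) (hdb : ∀ k, d k ≤ b k) :
    ∀ k, 0 ≤ Dr d b k
  | 0 => le_refl 0
  | k + 1 => by
      have h1 := Dr_nonneg d b hd hdb k
      have h2 := hd k
      have h3 := hdb k
      simp only [Dr]; linarith

lemma Dr_le (d b : ℕ → ℝ) (hd : ∀ k, 0 < d k) (hdb : ∀ k, d k ≤ b k)
    (hgrow : ∀ k, 2 * (d k + b k) ≤ d (k + 1)) :
    ∀ k, Dr d b k ≤ d k / 2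
  | 0 => by have := hd 0; simp only [Dr]; linarith
  | k + 1 => by
      have h1 := Dr_le d b hd hdb hgrow k
      have h2 := hgrow k
      simp only [Dr]; linarith

/-- Membership of `f` in the level-`k` isolated set only depends on the initial set within
radius `Dr d b k` of `f`. -/
lemma isolated_locality (G : SimpleGraph V) (d b : ℕ → ℝ)
    (hd : ∀ k, 0 < d k) (hdb : ∀ k, d k ≤ b k) :
    ∀ (k : ℕ) (f : G.edgeSet) (N N' : Set G.edgeSet),
      (∀ g, eDist G f g ≤ ENNReal.ofReal (Dr d b k) → (g ∈ N ↔ g ∈ N')) →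
      (f ∈ isolatedSet G d b N k ↔ f ∈ isolatedSet G d b N' k)
  | 0, f, N, N', h => by
      simpa [isolatedSet] using h f (by simp [eDist_self])
  | k + 1, f, N, N', h => by
      have hDr0 := Dr_nonneg d b hd hdb k
      have hbk : (0:ℝ) ≤ b k + d k / 2 := by have := hd k; have := hdb k; linarith
      have hmem : ∀ (g : G.edgeSet), eDist G f g ≤ ENNReal.ofReal (b k + d k / 2) →
          (g ∈ isolatedSet G d b N k ↔ g ∈ isolatedSet G d b N' k) := by
        intro g hg
        refine isolated_locality G d b hd hdb k g N N' (fun h' hh' => h h' ?_)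
        calc eDist G f h' ≤ eDist G f g + eDist G g h' := eDist_triangle G f g h'
          _ ≤ ENNReal.ofReal (b k + d k / 2) + ENNReal.ofReal (Dr d b k) :=
              add_le_add hg hh'
          _ = ENNReal.ofReal (Dr d b (k + 1)) := by
              rw [← ENNReal.ofReal_add hbk hDr0]; simp only [Dr]; ring_nf
      have hself : f ∈ isolatedSet G d b N k ↔ f ∈ isolatedSet G d b N' k := by
        refine isolated_locality G d b hd hdb k f N N' (fun h' hh' => h h' ?_)
        refine le_trans hh' (ENNReal.ofReal_le_ofReal ?_)
        simp only [Dr]; linarith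
      simp only [isolatedSet, Set.mem_diff, Set.mem_setOf_eq, IsolatedIn, IsolatedPair,
        not_forall]
      constructor
      · rintro ⟨hf, hni⟩
        push_neg at hni
        obtain ⟨g, hgN, hgball⟩ := hni
        refine ⟨hself.mp hf, ?_⟩
        push_neg
        exact ⟨g, (hmem g hgball.1).mp hgN, hgball⟩
      · rintro ⟨hf, hni⟩
        push_neg at hni
        obtain ⟨g, hgN, hgball⟩ := hni
        refine ⟨hself.mpr hf, ?_⟩
        push_neg
        exact ⟨g, (hmem g hgball.1).mpr hgN, hgball⟩

end UFPaper

open UFPaper in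
/-- If moreover `d_{k+1} ≥ 2(d_k + b_k)` for all `k`, then for every edge `e`,
every `k ≥ 1` and every `N ∈ M_k(e)`, one has `N ⊆ B_e(d_k / 2)`. -/
theorem minForcing_subset_ball {V : Type*} (G : SimpleGraph V)
    (d b : ℕ → ℝ) (hd_mono : Monotone d) (hb_mono : Monotone b)
    (hdpos : ∀ k, 0 < d k) (hdb : ∀ k, d k ≤ b k)
    (hgrow : ∀ k, 2 * (d k + b k) ≤ d (k + 1)) :
    ∀ (e : G.edgeSet) (k : ℕ), 1 ≤ k →
      ∀ N ∈ minForcing G d b k e, N ⊆ ball G e (d k / 2) := by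
  intro e k _ N hN f hf
  obtain ⟨heN, hmin⟩ := hN
  set N' : Set G.edgeSet := N ∩ ball G e (d k / 2) with hN'def
  have he' : e ∈ isolatedSet G d b N' k := by
    refine (isolated_locality G d b hdpos hdb k e N N' ?_).mp heN
    intro g hg
    have hball : g ∈ ball G e (d k / 2) :=
      le_trans hg (ENNReal.ofReal_le_ofReal (Dr_le d b hdpos hdb hgrow k))
    constructor
    · intro hgN; exact ⟨hgN, hball⟩
    · intro hgN'; exact hgN'.1
  by_contra hfb
  have hss : N' ⊂ N := by
    constructor
    · exact Set.inter_subset_left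
    · intro hsub
      exact hfb (hsub hf).2
  exact hmin N' hss he'
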